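/- A partition ρ₁ ≥ ρ₂ ≥ … ≥ ρ_r > 0 is Gorenstein (all maximal chains of the corresponding order ideal in ℕ₊ × ℕ₊ have the same length) if and only if ρ_i + i is the same for all indices i with ρ_i ≠ ρ_{i+1} (setting ρ_{r+1} = 0). -/

import Mathlib

def inversions {n : ℕ} (π : Equiv.Perm (Fin n)) : ℕ :=
  (Finset.univ.filter fun p : Fin n × Fin n => p.1 < p.2 ∧ π p.2 < π p.1).card

def Decomposable {n : ℕ} (π : Equiv.Perm (Fin n)) : Prop :=
  ∃ j : ℕ, 0 < j ∧ j < n ∧ ∀ i : Fin n, (i : ℕ) < j → (π i : ℕ) < j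

def Indecomposable {n : ℕ} (π : Equiv.Perm (Fin n)) : Prop :=
  0 < n ∧ ¬ Decomposable π

def invTable {n : ℕ} (π : Equiv.Perm (Fin n)) (i : Fin n) : ℕ :=
  (Finset.univ.filter fun j : Fin n => i < j ∧ π j < π i).card

def Avoids123 {n : ℕ} (π : Equiv.Perm (Fin n)) : Prop :=
  ¬ ∃ i j k : Fin n, i < j ∧ j < k ∧ π i < π j ∧ π j < π k

def Avoids132 {n : ℕ} (π : Equiv.Perm (Fin n)) : Prop :=
  ¬ ∃ i j k : Fin n, i < j ∧ j < k ∧ π i < π k ∧ π k < π j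

def Avoids213 {n : ℕ} (π : Equiv.Perm (Fin n)) : Prop :=
  ¬ ∃ i j k : Fin n, i < j ∧ j < k ∧ π j < π i ∧ π i < π k

def Avoids231 {n : ℕ} (π : Equiv.Perm (Fin n)) : Prop :=
  ¬ ∃ i j k : Fin n, i < j ∧ j < k ∧ π k < π i ∧ π i < π j

def Avoids312 {n : ℕ} (π : Equiv.Perm (Fin n)) : Prop :=
  ¬ ∃ i j k : Fin n, i < j ∧ j < k ∧ π j < π k ∧ π k < π i

def Avoids321 {n : ℕ} (π : Equiv.Perm (Fin n)) : Prop :=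
  ¬ ∃ i j k : Fin n, i < j ∧ j < k ∧ π k < π j ∧ π j < π i

def LTRMax {n : ℕ} (π : Equiv.Perm (Fin n)) (k : Fin n) : Prop :=
  ∀ i : Fin n, i < k → π i < π k

def revComp {n : ℕ} (π : Equiv.Perm (Fin n)) : Equiv.Perm (Fin n) :=
  Fin.revPerm * π * Fin.revPerm

/-- The order ideal of `ℕ₊ × ℕ₊` (under the componentwise order) associated with a
partition `ρ`: the pairs `(a, b)` with `1 ≤ b ≤ r` and `1 ≤ a ≤ ρ_b`. -/
def partitionIdeal (ρ : List ℕ) : Set (ℕ × ℕ) :=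
  {p | 1 ≤ p.2 ∧ p.2 ≤ ρ.length ∧ 1 ≤ p.1 ∧ p.1 ≤ ρ.getD (p.2 - 1) 0}

/-- A chain of the ideal, maximal among chains contained in the ideal. -/
def IsMaximalChain (ρ : List ℕ) (C : Finset (ℕ × ℕ)) : Prop :=
  ↑C ⊆ partitionIdeal ρ ∧ IsChain (· ≤ ·) (C : Set (ℕ × ℕ)) ∧
    ∀ C' : Finset (ℕ × ℕ), C ⊆ C' → ↑C' ⊆ partitionIdeal ρ →
      IsChain (· ≤ ·) (C' : Set (ℕ × ℕ)) → C' = C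

section Aux

variable {ρ : List ℕ}

lemma mem_pi {p : ℕ × ℕ} :
    p ∈ partitionIdeal ρ ↔ 1 ≤ p.2 ∧ p.2 ≤ ρ.length ∧ 1 ≤ p.1 ∧ p.1 ≤ ρ.getD (p.2 - 1) 0 :=
  Iff.rfl

lemma getD_anti (hsort : ρ.Pairwise (· ≥ ·)) {i j : ℕ} (hij : i ≤ j) :
    ρ.getD j 0 ≤ ρ.getD i 0 := by
  rcases lt_or_ge j ρ.length with hj | hj
  · have hi : i < ρ.length := lt_of_le_of_lt hij hj
    rw [List.getD_eq_getElem _ _ hj, List.getD_eq_getElem _ _ hi]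
    exact hsort.rel_get_of_le (a := ⟨i, hi⟩) (b := ⟨j, hj⟩) hij
  · rw [List.getD_eq_default _ _ hj]
    exact Nat.zero_le _

lemma getD_pos (hpos : ∀ x ∈ ρ, 0 < x) {i : ℕ} (hi : i < ρ.length) :
    0 < ρ.getD i 0 := by
  rw [List.getD_eq_getElem _ _ hi]
  exact hpos _ (List.getElem_mem hi)

lemma ideal_down (hsort : ρ.Pairwise (· ≥ ·)) {u v : ℕ × ℕ}
    (hu : u ∈ partitionIdeal ρ) (h1 : 1 ≤ v.1) (h2 : 1 ≤ v.2) (hv : v ≤ u) :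
    v ∈ partitionIdeal ρ := by
  obtain ⟨hu1, hu2, hu3, hu4⟩ := hu
  obtain ⟨hv1, hv2⟩ := hv
  exact ⟨h2, le_trans hv2 hu2, h1,
    le_trans hv1 (le_trans hu4 (getD_anti hsort (by omega)))⟩

lemma maxchain_insert {C : Finset (ℕ × ℕ)} (hC : IsMaximalChain ρ C)
    {m : ℕ × ℕ} (hm : m ∈ partitionIdeal ρ)
    (hcomp : ∀ c ∈ C, m ≤ c ∨ c ≤ m) : m ∈ C := by
  have h := hC.2.2 (insert m C) (Finset.subset_insert _ _)
    (by
      rw [Finset.coe_insert]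
      exact Set.insert_subset hm hC.1)
    (by
      rw [Finset.coe_insert]
      exact hC.2.1.insert (fun c hc _ => hcomp c hc))
  rw [← h]
  exact Finset.mem_insert_self _ _

lemma one_one_mem {C : Finset (ℕ × ℕ)} (hC : IsMaximalChain ρ C)
    (hpos : ∀ x ∈ ρ, 0 < x) (hρ : ρ ≠ []) : (1, 1) ∈ C := by
  have hlen : 0 < ρ.length := List.length_pos_iff.mpr hρ
  apply maxchain_insert hC
  · exact ⟨le_refl _, hlen, le_refl _, getD_pos hpos hlen⟩
  · intro c hc
    left
    have := hC.1 hc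
    exact ⟨this.2.2.1, this.1⟩

lemma exists_top {C : Finset (ℕ × ℕ)} (hC : IsMaximalChain ρ C)
    (hne : C.Nonempty) : ∃ t ∈ C, ∀ c ∈ C, c ≤ t := by
  obtain ⟨t, htC, ht⟩ := C.exists_max_image (fun p => p.1 + p.2) hne
  refine ⟨t, htC, fun c hc => ?_⟩
  rcases eq_or_ne c t with rfl | hne'
  · exact le_refl _
  · rcases hC.2.1 hc htC hne' with h | h
    · exact h
    · have := ht c hc
      obtain ⟨h1, h2⟩ := h
      have : c = t := Prod.ext (by omega) (by omega)
      exact this.le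

lemma top_corner {C : Finset (ℕ × ℕ)} (hC : IsMaximalChain ρ C)
    {t : ℕ × ℕ} (htC : t ∈ C) (htop : ∀ c ∈ C, c ≤ t) :
    t.1 = ρ.getD (t.2 - 1) 0 ∧ ρ.getD t.2 0 < t.1 ∧ 1 ≤ t.2 ∧ t.2 ≤ ρ.length := by
  have htI := hC.1 htC
  obtain ⟨h1, h2, h3, h4⟩ := htI
  have hright : ¬ (t.1 + 1 ≤ ρ.getD (t.2 - 1) 0) := by
    intro hh
    have hm : (t.1 + 1, t.2) ∈ partitionIdeal ρ := ⟨h1, h2, by omega, hh⟩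
    have hmem := maxchain_insert hC hm (fun c hc => Or.inr
      (le_trans (htop c hc) ⟨Nat.le_succ _, le_refl _⟩))
    have := htop _ hmem
    exact absurd this.1 (by omega)
  have hup : ¬ (t.2 + 1 ≤ ρ.length ∧ t.1 ≤ ρ.getD t.2 0) := by
    rintro ⟨ha, hb⟩
    have hm : (t.1, t.2 + 1) ∈ partitionIdeal ρ := ⟨by omega, ha, h3, hb⟩
    have hmem := maxchain_insert hC hm (fun c hc => Or.inr
      (le_trans (htop c hc) ⟨le_refl _, Nat.le_succ _⟩))
    have := htop _ hmem
    exact absurd this.2 (by omega)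
  have e1 : t.1 = ρ.getD (t.2 - 1) 0 := by omega
  refine ⟨e1, ?_, h1, h2⟩
  rcases lt_or_ge t.2 ρ.length with hl | hl
  · omega
  · have : ρ.getD t.2 0 = 0 := List.getD_eq_default _ _ hl
    omega

lemma card_maxchain (hsort : ρ.Pairwise (· ≥ ·))
    {C : Finset (ℕ × ℕ)} (hC : IsMaximalChain ρ C)
    (hpos : ∀ x ∈ ρ, 0 < x) (hρ : ρ ≠ [])
    {t : ℕ × ℕ} (htC : t ∈ C) (htop : ∀ c ∈ C, c ≤ t) :
    C.card = t.1 + t.2 - 1 := by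
  have h11 : (1, 1) ∈ C := one_one_mem hC hpos hρ
  -- gap-free step
  have step : ∀ s : ℕ, (∃ p ∈ C, p.1 + p.2 = s) → s < t.1 + t.2 →
      ∃ p ∈ C, p.1 + p.2 = s + 1 := by
    intro s ⟨p, hpC, hps⟩ hs
    have hDne : (C.filter (fun c => s < c.1 + c.2)).Nonempty :=
      ⟨t, Finset.mem_filter.mpr ⟨htC, hs⟩⟩
    obtain ⟨q, hqD, hqmin⟩ := (C.filter (fun c => s < c.1 + c.2)).exists_min_image
      (fun c => c.1 + c.2) hDne
    rw [Finset.mem_filter] at hqD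
    obtain ⟨hqC, hqs⟩ := hqD
    have hpq : p ≤ q := by
      rcases eq_or_ne p q with rfl | hne
      · exact le_refl _
      · rcases hC.2.1 hpC hqC hne with h | h
        · exact h
        · exfalso; obtain ⟨a, b⟩ := h; omega
    rcases eq_or_lt_of_le (show s + 1 ≤ q.1 + q.2 by omega) with heq | hlt
    · exact ⟨q, hqC, heq.symm⟩
    · -- insert an intermediate element m
      obtain ⟨hpq1, hpq2⟩ := hpq
      obtain ⟨m, hms, hpm, hmq⟩ : ∃ m : ℕ × ℕ, m.1 + m.2 = s + 1 ∧ p ≤ m ∧ m ≤ q := by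
        rcases lt_or_ge p.1 q.1 with h | h
        · exact ⟨(p.1 + 1, p.2), show p.1 + 1 + p.2 = s + 1 by omega,
            ⟨Nat.le_succ _, le_refl _⟩, ⟨h, hpq2⟩⟩
        · have he : p.1 = q.1 := le_antisymm hpq1 h
          exact ⟨(p.1, p.2 + 1), show p.1 + (p.2 + 1) = s + 1 by omega,
            ⟨le_refl _, Nat.le_succ _⟩, ⟨le_of_eq he, by omega⟩⟩
      have hmI : m ∈ partitionIdeal ρ := by
        have hpI := hC.1 hpC
        refine ideal_down hsort (hC.1 hqC) ?_ ?_ hmq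
        · exact le_trans hpI.2.2.1 hpm.1
        · exact le_trans hpI.1 hpm.2
      have hmC : m ∈ C := by
        apply maxchain_insert hC hmI
        intro c hc
        by_cases hcs : s < c.1 + c.2
        · left
          have hqc : q ≤ c := by
            have hmin := hqmin c (Finset.mem_filter.mpr ⟨hc, hcs⟩)
            rcases eq_or_ne c q with rfl | hne
            · exact le_refl _
            · rcases hC.2.1 hc hqC hne with h | h
              · obtain ⟨a, b⟩ := h
                have : c = q := Prod.ext (by omega) (by omega)
                exact this.ge
              · exact h
          exact le_trans hmq hqc
        · right
          have hcp : c ≤ p := by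
            rcases eq_or_ne c p with rfl | hne
            · exact le_refl _
            · rcases hC.2.1 hc hpC hne with h | h
              · exact h
              · obtain ⟨a, b⟩ := h
                have : c = p := Prod.ext (by omega) (by omega)
                exact this.le
          exact le_trans hcp hpm
      have hmD : m ∈ C.filter (fun c => s < c.1 + c.2) :=
        Finset.mem_filter.mpr ⟨hmC, by omega⟩
      have := hqmin m hmD
      omega
  -- the image of the sum map
  have hT2 : 2 ≤ t.1 + t.2 := by
    have := hC.1 htC; obtain ⟨a, _, c, _⟩ := this; omega
  have key : ∀ s : ℕ, 2 ≤ s → s ≤ t.1 + t.2 → ∃ p ∈ C, p.1 + p.2 = s := by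
    intro s
    induction s with
    | zero => omega
    | succ n ih =>
      intro h1 h2
      rcases Nat.lt_or_ge n 2 with h | h
      · have hn : n = 1 := by omega
        subst hn
        exact ⟨(1, 1), h11, rfl⟩
      · obtain ⟨p, hpC, hps⟩ := ih h (by omega)
        exact step n ⟨p, hpC, hps⟩ (by omega)
  have himg : C.image (fun p => p.1 + p.2) = Finset.Icc 2 (t.1 + t.2) := by
    apply Finset.Subset.antisymm
    · intro s hs
      rw [Finset.mem_image] at hs
      obtain ⟨p, hpC, rfl⟩ := hs
      have hpI := hC.1 hpC
      obtain ⟨a, _, c, _⟩ := hpI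
      have hle := htop p hpC
      rw [Finset.mem_Icc]
      exact ⟨by omega, by obtain ⟨x, y⟩ := hle; omega⟩
    · intro s hs
      rw [Finset.mem_Icc] at hs
      rw [Finset.mem_image]
      obtain ⟨p, hpC, hps⟩ := key s hs.1 hs.2
      exact ⟨p, hpC, hps⟩
  have hinj : Set.InjOn (fun p : ℕ × ℕ => p.1 + p.2) ↑C := by
    intro p hp q hq hpq
    simp only at hpq
    rcases eq_or_ne p q with rfl | hne
    · rfl
    · rcases hC.2.1 hp hq hne with h | h
      · obtain ⟨a, b⟩ := h
        exact Prod.ext (by omega) (by omega)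
      · obtain ⟨a, b⟩ := h
        exact Prod.ext (by omega) (by omega)
  have := Finset.card_image_of_injOn hinj
  rw [himg] at this
  rw [← this, Nat.card_Icc]
  omega

lemma corner_chain (hsort : ρ.Pairwise (· ≥ ·)) (hpos : ∀ x ∈ ρ, 0 < x)
    {i : ℕ} (h1 : 1 ≤ i) (h2 : i ≤ ρ.length)
    (hcorner : ρ.getD i 0 < ρ.getD (i - 1) 0) :
    ∃ C : Finset (ℕ × ℕ), IsMaximalChain ρ C ∧ C.card = ρ.getD (i - 1) 0 + i - 1 := by
  set a := ρ.getD (i - 1) 0 with ha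
  have hane : 1 ≤ a := by omega
  set C : Finset (ℕ × ℕ) :=
    (Finset.Icc 1 a).image (fun x => (x, 1)) ∪ (Finset.Icc 1 i).image (fun y => (a, y))
    with hCdef
  have hmem : ∀ q : ℕ × ℕ, q ∈ C ↔
      (q.2 = 1 ∧ 1 ≤ q.1 ∧ q.1 ≤ a) ∨ (q.1 = a ∧ 1 ≤ q.2 ∧ q.2 ≤ i) := by
    intro q
    simp only [hCdef, Finset.mem_union, Finset.mem_image, Finset.mem_Icc, Prod.ext_iff]
    constructor
    · rintro (⟨x, hx, ex, ey⟩ | ⟨y, hy, ex, ey⟩)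
      · exact Or.inl ⟨ey.symm, by omega, by omega⟩
      · exact Or.inr ⟨ex.symm, by omega, by omega⟩
    · rintro (⟨e, hx1, hx2⟩ | ⟨e, hy1, hy2⟩)
      · exact Or.inl ⟨q.1, ⟨hx1, hx2⟩, rfl, e.symm⟩
      · exact Or.inr ⟨q.2, ⟨hy1, hy2⟩, e.symm, rfl⟩
  have hsub : ↑C ⊆ partitionIdeal ρ := by
    intro q hq
    rw [Finset.mem_coe, hmem] at hq
    rcases hq with ⟨e, hq1, hq2⟩ | ⟨e, hq1, hq2⟩
    · have hanti : ρ.getD (i - 1) 0 ≤ ρ.getD 0 0 := getD_anti hsort (Nat.zero_le _)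
      have : ρ.getD (q.2 - 1) 0 = ρ.getD 0 0 := by rw [e]
      exact ⟨by omega, by omega, hq1, by omega⟩
    · have hanti : ρ.getD (i - 1) 0 ≤ ρ.getD (q.2 - 1) 0 := getD_anti hsort (by omega)
      exact ⟨hq1, by omega, by omega, by omega⟩
  have hchain : IsChain (· ≤ ·) (C : Set (ℕ × ℕ)) := by
    intro q hq q' hq' hne
    rw [Finset.mem_coe, hmem] at hq hq'
    rcases hq with ⟨e, h1', h2'⟩ | ⟨e, h1', h2'⟩ <;>
      rcases hq' with ⟨f, g1, g2⟩ | ⟨f, g1, g2⟩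
    · rcases le_total q.1 q'.1 with h | h
      · exact Or.inl ⟨h, by omega⟩
      · exact Or.inr ⟨h, by omega⟩
    · exact Or.inl ⟨by omega, by omega⟩
    · exact Or.inr ⟨by omega, by omega⟩
    · rcases le_total q.2 q'.2 with h | h
      · exact Or.inl ⟨by omega, h⟩
      · exact Or.inr ⟨by omega, h⟩
  have ha1C : (a, 1) ∈ C := (hmem _).mpr (Or.inl ⟨rfl, hane, le_refl _⟩)
  have haiC : (a, i) ∈ C := (hmem _).mpr (Or.inr ⟨rfl, h1, le_refl _⟩)
  have hmax : ∀ C' : Finset (ℕ × ℕ), C ⊆ C' → ↑C' ⊆ partitionIdeal ρ →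
      IsChain (· ≤ ·) (C' : Set (ℕ × ℕ)) → C' = C := by
    intro C' hCC' hsub' hchain'
    apply Finset.Subset.antisymm _ hCC'
    intro q hq
    obtain ⟨i1, i2, i3, i4⟩ := hsub' hq
    rw [hmem]
    rcases eq_or_ne q (a, 1) with rfl | hne1
    · exact Or.inl ⟨rfl, hane, le_refl _⟩
    rcases hchain' (Finset.mem_coe.mpr hq) (Finset.mem_coe.mpr (hCC' ha1C)) hne1 with
      hle | hge
    · have h21 : q.2 ≤ 1 := hle.2
      exact Or.inl ⟨by omega, i3, hle.1⟩
    · -- a ≤ q.1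
      rcases eq_or_ne q (a, i) with rfl | hne2
      · exact Or.inr ⟨rfl, by omega, le_refl _⟩
      rcases hchain' (Finset.mem_coe.mpr hq) (Finset.mem_coe.mpr (hCC' haiC)) hne2 with
        hle | hge'
      · have : q.1 = a := le_antisymm hle.1 hge.1
        exact Or.inr ⟨this, i1, hle.2⟩
      · exfalso
        have hi2 : i ≤ q.2 := hge'.2
        have hga : a ≤ q.1 := hge.1
        have h2lt : i < q.2 := by
          rcases eq_or_lt_of_le hi2 with he | he
          · exfalso
            apply hne2
            have hq1 : q.1 = a := le_antisymm (by
              have : ρ.getD (q.2 - 1) 0 ≤ ρ.getD (i - 1) 0 := getD_anti hsort (by omega)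
              omega) hga
            exact Prod.ext hq1 he.symm
          · exact he
        have : ρ.getD (q.2 - 1) 0 ≤ ρ.getD i 0 := getD_anti hsort (by omega)
        omega
  have hC : IsMaximalChain ρ C := ⟨hsub, hchain, hmax⟩
  refine ⟨C, hC, ?_⟩
  have htop : ∀ c ∈ C, c ≤ (a, i) := by
    intro c hc
    rw [hmem] at hc
    rcases hc with ⟨e, h1', h2'⟩ | ⟨e, h1', h2'⟩
    · exact ⟨h2', by omega⟩
    · exact ⟨le_of_eq e, h2'⟩
  exact card_maxchain hsort hC hpos (List.length_pos_iff.mp (by omega)) haiC htop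

theorem gorenstein_iff' (ρ : List ℕ) (hsort : ρ.Pairwise (· ≥ ·))
    (hpos : ∀ x ∈ ρ, 0 < x) :
    (∀ C₁ C₂ : Finset (ℕ × ℕ), IsMaximalChain ρ C₁ → IsMaximalChain ρ C₂ →
        C₁.card = C₂.card) ↔
      ∃ d : ℕ, ∀ i : ℕ, 1 ≤ i → i ≤ ρ.length →
        ρ.getD (i - 1) 0 ≠ ρ.getD i 0 → ρ.getD (i - 1) 0 + i = d := by
  constructor
  · intro hall
    rcases eq_or_ne ρ [] with rfl | hne
    · exact ⟨0, fun i hi1 hi2 _ => absurd (le_trans hi1 hi2) (by simp)⟩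
    · have hr1 : 1 ≤ ρ.length := List.length_pos_iff.mpr hne
      have hcr : ρ.getD ρ.length 0 < ρ.getD (ρ.length - 1) 0 := by
        rw [List.getD_eq_default _ _ (le_refl _)]
        exact getD_pos hpos (by omega)
      obtain ⟨Cr, hCr, hCrcard⟩ := corner_chain hsort hpos hr1 (le_refl _) hcr
      refine ⟨ρ.getD (ρ.length - 1) 0 + ρ.length, fun i hi1 hi2 hine => ?_⟩
      have hci : ρ.getD i 0 < ρ.getD (i - 1) 0 :=
        lt_of_le_of_ne (getD_anti hsort (by omega)) (Ne.symm hine)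
      obtain ⟨Ci, hCi, hCicard⟩ := corner_chain hsort hpos hi1 hi2 hci
      have hcards := hall Ci Cr hCi hCr
      omega
  · rintro ⟨d, hd⟩ C₁ C₂ h₁ h₂
    rcases eq_or_ne ρ [] with rfl | hne
    · have hempty : ∀ C : Finset (ℕ × ℕ), IsMaximalChain [] C → C = ∅ := by
        intro C hC
        rw [Finset.eq_empty_iff_forall_notMem]
        intro p hp
        have := hC.1 hp
        obtain ⟨u1, u2, _⟩ := this
        simp at u2
        omega
      rw [hempty C₁ h₁, hempty C₂ h₂]
    · have key : ∀ C : Finset (ℕ × ℕ), IsMaximalChain ρ C → C.card = d - 1 := by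
        intro C hC
        have h11 := one_one_mem hC hpos hne
        obtain ⟨t, htC, htop⟩ := exists_top hC ⟨_, h11⟩
        obtain ⟨e1, e2, e3, e4⟩ := top_corner hC htC htop
        have hcard := card_maxchain hsort hC hpos hne htC htop
        have hgoal := hd t.2 e3 e4 (by omega)
        omega
      rw [key C₁ h₁, key C₂ h₂]

end Aux

/-- A partition `ρ₁ ≥ ρ₂ ≥ … ≥ ρ_r > 0` is Gorenstein (all maximal chains of its
order ideal have the same length) iff `ρᵢ + i` is constant over the indices `i`
with `ρᵢ ≠ ρᵢ₊₁` (where `ρ_{r+1} = 0`). -/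
theorem gorenstein_iff (ρ : List ℕ) (hsort : ρ.Pairwise (· ≥ ·))
    (hpos : ∀ x ∈ ρ, 0 < x) :
    (∀ C₁ C₂ : Finset (ℕ × ℕ), IsMaximalChain ρ C₁ → IsMaximalChain ρ C₂ →
        C₁.card = C₂.card) ↔
      ∃ d : ℕ, ∀ i : ℕ, 1 ≤ i → i ≤ ρ.length →
        ρ.getD (i - 1) 0 ≠ ρ.getD i 0 → ρ.getD (i - 1) 0 + i = d := by
  exact gorenstein_iff' ρ hsort hpos
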